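/- Assume ℓ₀₁ ≠ 0, ℓ₀₃ ≠ 0 and ℓ₀₂ = ℓ₀₁ ℓ₀₃. Let A be a unital associative k-algebra and x : {0,1,2,3} → A. Then Σ_{ρ,σ} W_{αβρσ} x_ρ x_σ = 0 for all α,β ∈ {0,1,2,3} if and only if x satisfies the A_{ℓ,p}-relations. -/

import Mathlib

/-- For distinct `μ ν`, `pr μ ν = (μ', ν')`, the unique pair with
`{μ', ν'} = {0,1,2,3} \ {μ, ν}` and `μ' > ν'` iff `μ > ν`; `pr μ μ = (μ, μ)`. -/
def pr : Fin 4 → Fin 4 → Fin 4 × Fin 4 :=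
  ![![(0,0),(2,3),(1,3),(1,2)],
    ![(3,2),(1,1),(0,3),(0,2)],
    ![(3,1),(3,0),(2,2),(0,1)],
    ![(2,1),(2,0),(1,0),(3,3)]]

/-- The table `ν ↦ (ν̃, μ_ν, μ̃_ν)`. -/
def tnu : Fin 4 → Fin 4 × Fin 4 × Fin 4 :=
  ![(1,2,3),(0,3,2),(3,0,1),(2,1,0)]

/-- The conditions on the parameters `ℓ_{μν}`, `p_{μν}` of Definition 2.1. -/
def GoodParams {k : Type*} [Field k] (ℓ p : Fin 4 → Fin 4 → k) : Prop :=
  (∀ μ : Fin 4, ℓ μ μ = 1) ∧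
  (∀ μ ν : Fin 4, ℓ μ ν = ℓ ν μ) ∧
  (∀ μ ν : Fin 4, ℓ (pr μ ν).1 (pr μ ν).2 = ℓ μ ν) ∧
  (∀ μ ν : Fin 4, p μ ν = - p ν μ) ∧
  (∀ μ ν : Fin 4, ℓ μ ν ^ 2 + p μ ν * p (pr μ ν).2 (pr μ ν).1 = 1)

/-- `x` satisfies the `A_{ℓ,p}`-relations: `x_μ x_ν = ℓ_{μν} x_ν x_μ + p_{μν} x_{ν'} x_{μ'}`. -/
def AlpRel {k A : Type*} [Field k] [Ring A] [Algebra k A]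
    (ℓ p : Fin 4 → Fin 4 → k) (x : Fin 4 → A) : Prop :=
  ∀ μ ν : Fin 4,
    x μ * x ν = ℓ μ ν • (x ν * x μ) + p μ ν • (x (pr μ ν).2 * x (pr μ ν).1)

/-- The sign of an integer, valued in `{-1, 0, 1}`. -/
def sgnZ (n : ℤ) : ℤ := if 0 < n then 1 else if n < 0 then -1 else 0

/-- The totally antisymmetric symbol `ε_{αβρσ}` with `ε_{0123} = 1`. -/
def eps4 (α β ρ σ : Fin 4) : ℤ :=
  sgnZ ((β.val : ℤ) - α.val) * sgnZ ((ρ.val : ℤ) - α.val) *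
    sgnZ ((σ.val : ℤ) - α.val) * sgnZ ((ρ.val : ℤ) - β.val) *
    sgnZ ((σ.val : ℤ) - β.val) * sgnZ ((σ.val : ℤ) - ρ.val)

/-- The tensor `L_{αβρσ}`: equal to `1`, `ℓ₀₁` or `ℓ₀₁ℓ₀₃` on the listed
quadruples of pairwise distinct indices, and `0` otherwise. -/
def Lform {k : Type*} [Field k] (l1 l3 : k) (α β ρ σ : Fin 4) : k :=
  if (α,β,ρ,σ) = (0,1,3,2) ∨ (α,β,ρ,σ) = (2,0,1,3) ∨ (α,β,ρ,σ) = (3,2,0,1) ∨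
     (α,β,ρ,σ) = (1,3,2,0) ∨ (α,β,ρ,σ) = (1,0,2,3) ∨ (α,β,ρ,σ) = (3,1,0,2) ∨
     (α,β,ρ,σ) = (2,3,1,0) ∨ (α,β,ρ,σ) = (0,2,3,1) then 1
  else if (α,β,ρ,σ) = (0,1,2,3) ∨ (α,β,ρ,σ) = (3,0,1,2) ∨ (α,β,ρ,σ) = (2,3,0,1) ∨
     (α,β,ρ,σ) = (1,2,3,0) ∨ (α,β,ρ,σ) = (1,0,3,2) ∨ (α,β,ρ,σ) = (0,3,2,1) ∨
     (α,β,ρ,σ) = (3,2,1,0) ∨ (α,β,ρ,σ) = (2,1,0,3) then l1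
  else if (α,β,ρ,σ) = (0,3,1,2) ∨ (α,β,ρ,σ) = (2,0,3,1) ∨ (α,β,ρ,σ) = (1,2,0,3) ∨
     (α,β,ρ,σ) = (3,1,2,0) ∨ (α,β,ρ,σ) = (3,0,2,1) ∨ (α,β,ρ,σ) = (1,3,0,2) ∨
     (α,β,ρ,σ) = (2,1,3,0) ∨ (α,β,ρ,σ) = (0,2,1,3) then l1 * l3
  else 0

/-- The tensor `P_{αβ}`: `P₀₁ = p₃₂`, `P₀₂ = p₃₁`, `P₀₃ = ℓ₀₁p₂₁`,
`P₁₂ = ℓ₀₁p₃₀`, `P₁₃ = p₂₀`, `P₂₃ = p₁₀`, `P_{βα} = −P_{αβ}`, `P_{αα} = 0`. -/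
def Pform {k : Type*} [Field k] (ℓ p : Fin 4 → Fin 4 → k) : Fin 4 → Fin 4 → k :=
  ![![0, p 3 2, p 3 1, ℓ 0 1 * p 2 1],
    ![-(p 3 2), 0, ℓ 0 1 * p 3 0, p 2 0],
    ![-(p 3 1), -(ℓ 0 1 * p 3 0), 0, p 1 0],
    ![-(ℓ 0 1 * p 2 1), -(p 2 0), -(p 1 0), 0]]

/-- The multilinear form
`W_{αβρσ} := L_{αβρσ} ε_{αβρσ} + P_{αβ} δ_{αρ} δ_{βσ} ε_{αβα'β'}`. -/
def Wform {k : Type*} [Field k] (ℓ p : Fin 4 → Fin 4 → k)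
    (α β ρ σ : Fin 4) : k :=
  Lform (ℓ 0 1) (ℓ 0 3) α β ρ σ * (eps4 α β ρ σ : ℤ) +
    Pform ℓ p α β * (if α = ρ then 1 else 0) * (if β = σ then 1 else 0) *
      (eps4 α β (pr α β).1 (pr α β).2 : ℤ)

section Aux15

variable {k A : Type*} [Field k] [CharZero k] [Ring A] [Algebra k A]

/-- auxiliary relation element -/
def Rrel15 (ℓ p : Fin 4 → Fin 4 → k) (x : Fin 4 → A) (μ ν : Fin 4) : A :=
  x μ * x ν - ℓ μ ν • (x ν * x μ) - p μ ν • (x (pr μ ν).2 * x (pr μ ν).1)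

/-- auxiliary coefficient matrix -/
def cW15 (l : k) : Fin 4 → Fin 4 → k :=
  ![![1,-1,1,-l],![-1,1,-l,1],![1,-l,1,-1],![-l,1,-1,1]]

lemma vv0' : ((0:Fin 4):ℕ) = 0 := rfl
lemma vv1' : ((1:Fin 4):ℕ) = 1 := rfl
lemma vv2' : ((2:Fin 4):ℕ) = 2 := rfl
lemma vv3' : ((3:Fin 4):ℕ) = 3 := rfl

lemma prInv15 : ∀ μ ν : Fin 4, pr (pr ν μ).2 (pr ν μ).1 = (μ, ν) := by decide

end Aux15

set_option maxHeartbeats 4000000 in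
theorem stmt15 {k A : Type*} [Field k] [CharZero k] [Ring A] [Algebra k A]
    (ℓ p : Fin 4 → Fin 4 → k) (hlp : GoodParams ℓ p)
    (h01 : ℓ 0 1 ≠ 0) (h03 : ℓ 0 3 ≠ 0) (h02 : ℓ 0 2 = ℓ 0 1 * ℓ 0 3)
    (x : Fin 4 → A) :
    (∀ α β : Fin 4,
      ∑ ρ : Fin 4, ∑ σ : Fin 4, Wform ℓ p α β ρ σ • (x ρ * x σ) = 0) ↔
      AlpRel ℓ p x := by
  obtain ⟨hd, hs, hpr, ha, -⟩ := hlp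
  -- ℓ facts
  have eL10 : ℓ 1 0 = ℓ 0 1 := hs 1 0
  have eL30 : ℓ 3 0 = ℓ 0 3 := hs 3 0
  have eL23 : ℓ 2 3 = ℓ 0 1 := by simpa [pr] using hpr 0 1
  have eL32 : ℓ 3 2 = ℓ 0 1 := by rw [hs 3 2, eL23]
  have eL13 : ℓ 1 3 = ℓ 0 1 * ℓ 0 3 := by
    have h' := hpr 0 2; simp [pr] at h'; rw [h', h02]
  have eL31 : ℓ 3 1 = ℓ 0 1 * ℓ 0 3 := by rw [hs 3 1, eL13]
  have eL20 : ℓ 2 0 = ℓ 0 1 * ℓ 0 3 := by rw [hs 2 0, h02]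
  have eL12 : ℓ 1 2 = ℓ 0 3 := by simpa [pr] using hpr 0 3
  have eL21 : ℓ 2 1 = ℓ 0 3 := by rw [hs 2 1, eL12]
  have eLd0 : ℓ 0 0 = 1 := hd 0
  have eLd1 : ℓ 1 1 = 1 := hd 1
  have eLd2 : ℓ 2 2 = 1 := hd 2
  have eLd3 : ℓ 3 3 = 1 := hd 3
  -- p facts
  have eP01 : p 0 1 = -p 1 0 := ha 0 1
  have eP02 : p 0 2 = -p 2 0 := ha 0 2
  have eP03 : p 0 3 = -p 3 0 := ha 0 3
  have eP12 : p 1 2 = -p 2 1 := ha 1 2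
  have eP13 : p 1 3 = -p 3 1 := ha 1 3
  have eP23 : p 2 3 = -p 3 2 := ha 2 3
  have ePd : ∀ μ : Fin 4, p μ μ = 0 := by
    intro μ
    have h2 := ha μ μ
    have h2' : (2 : k) * p μ μ = 0 := by linear_combination h2
    exact (mul_eq_zero.mp h2').resolve_left two_ne_zero
  have ePd0 : p 0 0 = 0 := ePd 0
  have ePd1 : p 1 1 = 0 := ePd 1
  have ePd2 : p 2 2 = 0 := ePd 2
  have ePd3 : p 3 3 = 0 := ePd 3
  -- the key identity
  have key : ∀ α β : Fin 4,
      (∑ ρ : Fin 4, ∑ σ : Fin 4, Wform ℓ p α β ρ σ • (x ρ * x σ)) =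
        cW15 (ℓ 0 1) α β • Rrel15 ℓ p x (pr β α).1 (pr β α).2 := by
    intro α β
    fin_cases α <;> fin_cases β <;>
      · simp only [Fin.sum_univ_four, Wform, Lform, Pform, eps4, sgnZ, pr,
          Rrel15, cW15]
        norm_num [Fin.ext_iff, vv0', vv1', vv2', vv3']
        simp only [eL10, eL30, eL23, eL32, eL13, eL31, eL20, eL12, eL21,
          eLd0, eLd1, eLd2, eLd3, h02, eP01, eP02, eP03, eP12, eP13, eP23,
          ePd0, ePd1, ePd2, ePd3, Matrix.cons_val, Matrix.cons_val_zero, Matrix.cons_val_one]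
        module
  have hc : ∀ a b : Fin 4, cW15 (ℓ 0 1) a b ≠ 0 := by
    intro a b; fin_cases a <;> fin_cases b <;> simp [cW15, h01]
  constructor
  · intro h
    have hR : ∀ μ ν : Fin 4, Rrel15 ℓ p x μ ν = 0 := by
      intro μ ν
      have hk := key (pr ν μ).1 (pr ν μ).2
      rw [h _ _, prInv15 μ ν] at hk
      have hc' := hc (pr ν μ).1 (pr ν μ).2
      have := congrArg (fun y => (cW15 (ℓ 0 1) (pr ν μ).1 (pr ν μ).2)⁻¹ • y)
        hk.symm
      simpa [smul_smul, inv_mul_cancel₀ hc'] using this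
    intro μ ν
    have h' := hR μ ν
    rw [Rrel15, sub_sub, sub_eq_zero] at h'
    exact h'
  · intro h α β
    rw [key α β]
    have h' : Rrel15 ℓ p x (pr β α).1 (pr β α).2 = 0 := by
      rw [Rrel15, sub_sub, sub_eq_zero]
      exact h _ _
    rw [h', smul_zero]
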